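/- arXiv:1308.1427 — 3 statements merged into one kernel-verified Lean document; each statement's English description precedes it below -/
import Mathlib

section
/- If A > |B| + |C|, then every complex solution λ of the equation λ + A + B·e^{−λ} + C·e^{−λR} = 0 (with 0 < R < 1) satisfies Re(λ) < 0. -/
open Complex

theorem mrs_stability (A B C R : ℝ) (hR0 : 0 < R) (hR1 : R < 1)
    (hA : A > |B| + |C|) (z : ℂ)
    (hz : z + (A : ℂ) + (B : ℂ) * Complex.exp (-z) + (C : ℂ) * Complex.exp (-z * (R : ℂ)) = 0) :
    z.re < 0 := by
  by_contra h
  push_neg at h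
  -- |exp(-z)| ≤ 1 and |exp(-zR)| ≤ 1
  have h1 : ‖Complex.exp (-z)‖ ≤ 1 := by
    rw [Complex.norm_exp]
    simp only [Complex.neg_re]
    exact Real.exp_le_one_iff.mpr (by linarith)
  have h2 : ‖Complex.exp (-z * (R : ℂ))‖ ≤ 1 := by
    rw [Complex.norm_exp]
    have : (-z * (R : ℂ)).re = -(z.re * R) := by simp [Complex.mul_re]
    rw [this]
    exact Real.exp_le_one_iff.mpr (by nlinarith)
  have hre := congrArg Complex.re hz
  simp only [Complex.add_re, Complex.mul_re, Complex.ofReal_re, Complex.ofReal_im,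
    Complex.zero_re, zero_mul, sub_zero] at hre
  have hb1 : |(Complex.exp (-z)).re| ≤ 1 :=
    le_trans (Complex.abs_re_le_norm _) h1
  have hb2 : |(Complex.exp (-z * (R : ℂ))).re| ≤ 1 :=
    le_trans (Complex.abs_re_le_norm _) h2
  have e1 := abs_le.mp hb1
  have e2 := abs_le.mp hb2
  have aB := abs_le.mp (le_refl |B|)
  have aC := abs_le.mp (le_refl |C|)
  rcases abs_cases B with ⟨hB, _⟩ | ⟨hB, _⟩ <;>
  rcases abs_cases C with ⟨hC, _⟩ | ⟨hC, _⟩ <;>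
  nlinarith [mul_le_mul_of_nonneg_left e1.1 (abs_nonneg B),
    mul_le_mul_of_nonneg_left e2.1 (abs_nonneg C),
    mul_le_mul_of_nonneg_left e1.2 (abs_nonneg B),
    mul_le_mul_of_nonneg_left e2.2 (abs_nonneg C)]
end

section
/- For real ω with sin(ω(1−R)) ≠ 0, setting B(ω) = (A sin(ωR) + ω cos(ωR)) / sin(ω(1−R)) and C(ω) = −(A sin(ω) + ω cos(ω)) / sin(ω(1−R)), the complex number λ = iω satisfies λ + A + B(ω)·e^{−λ} + C(ω)·e^{−λR} = 0. -/
open Real Complex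

theorem bifurcation_curve_root (A R ω : ℝ) (hR0 : 0 < R) (hR1 : R < 1)
    (hs : Real.sin (ω * (1 - R)) ≠ 0) :
    let B : ℝ := (A * Real.sin (ω * R) + ω * Real.cos (ω * R)) / Real.sin (ω * (1 - R))
    let C : ℝ := -(A * Real.sin ω + ω * Real.cos ω) / Real.sin (ω * (1 - R))
    (Complex.I * (ω : ℂ)) + (A : ℂ) + (B : ℂ) * Complex.exp (-(Complex.I * (ω : ℂ)))
      + (C : ℂ) * Complex.exp (-(Complex.I * (ω : ℂ)) * (R : ℂ)) = 0 := by
  intro B C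
  have h1 : -(Complex.I * (ω : ℂ)) = ((-ω : ℝ) : ℂ) * Complex.I := by
    push_cast; ring
  have h2 : -(Complex.I * (ω : ℂ)) * (R : ℂ) = ((-(ω * R) : ℝ) : ℂ) * Complex.I := by
    push_cast; ring
  have key : Real.sin (ω * (1 - R)) = Real.sin ω * Real.cos (ω * R)
      - Real.cos ω * Real.sin (ω * R) := by
    have h : ω * (1 - R) = ω - ω * R := by ring
    rw [h, Real.sin_sub]
  have hs' : ((Real.sin (ω * (1 - R)) : ℝ) : ℂ) ≠ 0 := Complex.ofReal_ne_zero.mpr hs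
  show _ + _ + _ * Complex.exp (-(Complex.I * (ω : ℂ)))
      + _ * Complex.exp (-(Complex.I * (ω : ℂ)) * (R : ℂ)) = 0
  rw [h2, h1, Complex.exp_mul_I, Complex.exp_mul_I]
  simp only [B, C, ← Complex.ofReal_cos, ← Complex.ofReal_sin, Real.cos_neg, Real.sin_neg]
  rw [key] at hs' ⊢
  push_cast at hs' ⊢
  field_simp
  have hs'' : (-(Complex.sin (↑ω * ↑R) * Complex.cos ↑ω) + Complex.cos (↑ω * ↑R) * Complex.sin ↑ω) ≠ 0 := by
    convert hs' using 1; ring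
  linear_combination (-(Complex.I * (ω : ℂ) + (A : ℂ))) * mul_inv_cancel₀ hs''
end

section
/- Fix R ∈ (0,1), a positive integer j, and let A_j* = −(jπ/(1−R))·cot(jRπ/(1−R)) (assuming sin(jRπ/(1−R)) ≠ 0). Define B_j* = (−1)^j [(1−R)cos(jRπ/(1−R)) − jRπ·csc(jRπ/(1−R))]/(1−R)², and C_j* = [jπ·csc(jRπ/(1−R)) − (1−R)cos(jRπ/(1−R))]/(1−R)². Then for ω = jπ/(1−R), the complex number λ = iω satisfies λ + A_j* + B_j*·e^{−λ} + C_j*·e^{−λR} = 0. -/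
open Real

theorem transition_point_root (R : ℝ) (j : ℕ) (hj : 0 < j) (hR0 : 0 < R) (hR1 : R < 1)
    (hs : Real.sin (j * R * π / (1 - R)) ≠ 0) :
    let ω : ℝ := j * π / (1 - R)
    let A : ℝ := -(j * π / (1 - R)) * (Real.cos (j * R * π / (1 - R)) / Real.sin (j * R * π / (1 - R)))
    let B : ℝ := (-1 : ℝ) ^ j * ((1 - R) * Real.cos (j * R * π / (1 - R))
        - j * R * π * (1 / Real.sin (j * R * π / (1 - R)))) / (1 - R) ^ 2
    let C : ℝ := (j * π * (1 / Real.sin (j * R * π / (1 - R)))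
        - (1 - R) * Real.cos (j * R * π / (1 - R))) / (1 - R) ^ 2
    (Complex.I * (ω : ℂ)) + (A : ℂ) + (B : ℂ) * Complex.exp (-(Complex.I * (ω : ℂ)))
      + (C : ℂ) * Complex.exp (-(Complex.I * (ω : ℂ)) * (R : ℂ)) = 0 := by
  intro ω A B C
  have hR : (1 - R) ≠ 0 := by intro h; linarith [sub_eq_zero.mp h]
  have hωR : ω * R = j * R * π / (1 - R) := by show (↑j * π / (1 - R)) * R = _; field_simp
  have h2 : Complex.exp (-(Complex.I * (ω : ℂ)) * (R : ℂ))
      = Complex.exp (-(Complex.I * ((j * R * π / (1 - R) : ℝ) : ℂ))) := by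
    congr 1
    have : ((ω * R : ℝ) : ℂ) = (((j * R * π / (1 - R) : ℝ)) : ℂ) := by rw [hωR]
    push_cast at this ⊢
    rw [show -(Complex.I * (ω : ℂ)) * (R : ℂ) = -(Complex.I * ((ω : ℂ) * (R : ℂ))) from by ring, this]
  have hωθ : ω = j * π + j * R * π / (1 - R) := by show ↑j * π / (1 - R) = _; field_simp; ring
  have h1 : Complex.exp (-(Complex.I * (ω : ℂ)))
      = ((-1 : ℂ)) ^ j * Complex.exp (-(Complex.I * ((j * R * π / (1 - R) : ℝ) : ℂ))) := by
    rw [hωθ]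
    push_cast
    rw [show -(Complex.I * ((j : ℂ) * (π : ℂ) + (j : ℂ) * (R:ℂ) * (π:ℂ) / (1 - (R:ℂ))))
        = (j : ℂ) * (-((π:ℂ) * Complex.I)) + -(Complex.I * ((j : ℂ) * (R:ℂ) * (π:ℂ) / (1 - (R:ℂ)))) from by ring,
      Complex.exp_add, Complex.exp_nat_mul]
    congr 2
    rw [show -((π:ℂ) * Complex.I) = ((-π : ℝ) : ℂ) * Complex.I from by push_cast; ring,
      Complex.exp_mul_I]
    simp
  have hexpθ : Complex.exp (-(Complex.I * ((j * R * π / (1 - R) : ℝ) : ℂ)))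
      = ((Real.cos (j * R * π / (1 - R)) : ℂ)) - ((Real.sin (j * R * π / (1 - R)) : ℂ)) * Complex.I := by
    rw [show -(Complex.I * ((j * R * π / (1 - R) : ℝ) : ℂ))
        = ((-(j * R * π / (1 - R)) : ℝ) : ℂ) * Complex.I from by push_cast; ring,
      Complex.exp_mul_I]
    push_cast
    rw [Complex.cos_neg, Complex.sin_neg]
    ring
  have hcast : ((-1 : ℂ)) ^ j = (((-1 : ℝ) ^ j : ℝ) : ℂ) := by push_cast; ring
  rw [h1, h2, hexpθ, hcast]
  have hA : A * Real.sin (j * R * π / (1 - R)) = -(ω * Real.cos (j * R * π / (1 - R))) := by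
    show -(↑j * π / (1 - R)) * (Real.cos (↑j * R * π / (1 - R)) / Real.sin (↑j * R * π / (1 - R)))
        * Real.sin (↑j * R * π / (1 - R)) = -((↑j * π / (1 - R)) * Real.cos (↑j * R * π / (1 - R)))
    generalize Real.sin (↑j * R * π / (1 - R)) = s at hs ⊢
    field_simp
  have hεval : ((-1 : ℝ) ^ j) = 1 ∨ ((-1 : ℝ) ^ j) = -1 := by
    rcases Nat.even_or_odd j with h | h
    · exact Or.inl h.neg_one_pow
    · exact Or.inr h.neg_one_pow
  have hK : (B * ((-1 : ℝ) ^ j) + C) * Real.sin (j * R * π / (1 - R)) = ω := by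
    show ((-1 : ℝ) ^ j * ((1 - R) * Real.cos (j * R * π / (1 - R))
        - j * R * π * (1 / Real.sin (j * R * π / (1 - R)))) / (1 - R) ^ 2 * ((-1 : ℝ) ^ j)
        + (j * π * (1 / Real.sin (j * R * π / (1 - R)))
        - (1 - R) * Real.cos (j * R * π / (1 - R))) / (1 - R) ^ 2)
        * Real.sin (j * R * π / (1 - R)) = j * π / (1 - R)
    generalize Real.sin (↑j * R * π / (1 - R)) = s at hs ⊢
    rcases hεval with h | h <;> rw [h] <;> field_simp <;> ring
  have hA' : ((A : ℝ) : ℂ) * ((Real.sin (j * R * π / (1 - R)) : ℝ) : ℂ)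
      = -(((ω : ℝ) : ℂ) * ((Real.cos (j * R * π / (1 - R)) : ℝ) : ℂ)) := by
    exact_mod_cast congrArg Complex.ofReal hA
  have hK' : (((B : ℝ) : ℂ) * ((((-1 : ℝ) ^ j : ℝ)) : ℂ) + ((C : ℝ) : ℂ))
      * ((Real.sin (j * R * π / (1 - R)) : ℝ) : ℂ) = ((ω : ℝ) : ℂ) := by
    exact_mod_cast congrArg Complex.ofReal hK
  have hs' : ((Real.sin (j * R * π / (1 - R)) : ℝ) : ℂ) ≠ 0 := by exact_mod_cast hs
  have key : ((Real.sin (j * R * π / (1 - R)) : ℝ) : ℂ) *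
      ((Complex.I * (ω : ℂ)) + (A : ℂ)
        + (B : ℂ) * ((((-1 : ℝ) ^ j : ℝ) : ℂ) * (((Real.cos (j * R * π / (1 - R)) : ℝ) : ℂ)
            - ((Real.sin (j * R * π / (1 - R)) : ℝ) : ℂ) * Complex.I))
        + (C : ℂ) * (((Real.cos (j * R * π / (1 - R)) : ℝ) : ℂ)
            - ((Real.sin (j * R * π / (1 - R)) : ℝ) : ℂ) * Complex.I)) = 0 := by
    linear_combination (((Real.cos (j * R * π / (1 - R)) : ℝ) : ℂ)
      - ((Real.sin (j * R * π / (1 - R)) : ℝ) : ℂ) * Complex.I) * hK' + hA'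
  rcases mul_eq_zero.mp key with h | h
  · exact absurd h hs'
  · exact h
end
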